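/- For any braid σ in B_n ⊆ Aut(F_n) lying in the k-th term B_n(k) of the Andreadakis–Johnson filtration (k ≥ 2), writing x_i^σ = x_i C_i with C_i ∈ Γ_n(k+1), one has C_1 C_2 ⋯ C_n ∈ Γ_n(k+2). Consequently the image of the k-th Johnson homomorphism τ_k^B lies in the special derivation module b_n(k). -/

import Mathlib

private lemma central_prod {Q : Type*} [Group Q] :
    ∀ (n : ℕ) (x C : Fin n → Q), (∀ i, ∀ y, C i * y = y * C i) →
    (List.ofFn fun i => x i * C i).prod = (List.ofFn x).prod * (List.ofFn C).prod
  | 0, x, C, h => by simp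
  | n+1, x, C, h => by
    rw [List.ofFn_succ, List.ofFn_succ (f := x), List.ofFn_succ (f := C),
      List.prod_cons, List.prod_cons, List.prod_cons,
      central_prod n (fun i => x i.succ) (fun i => C i.succ) (fun i y => h i.succ y)]
    set P := (List.ofFn fun i => x i.succ).prod
    set R := (List.ofFn fun i => C i.succ).prod
    calc x 0 * C 0 * (P * R) = x 0 * (C 0 * P) * R := by group
      _ = x 0 * (P * C 0) * R := by rw [h 0 P]
      _ = x 0 * P * (C 0 * R) := by group

open scoped commutatorElement

/-- Let `σ` be a braid automorphism of the free group `F_n` (each generator is sent to a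
conjugate of itself and the product `x_1 ⋯ x_n` is fixed) lying in the `k`-th term of the
Andreadakis–Johnson filtration, i.e. `C_i := x_i⁻¹ · σ(x_i) ∈ Γ_n(k+1)` for all `i`
(`Γ_n(m)` is `lowerCentralSeries _ (m-1)` in Mathlib's indexing).  Then
`C_1 C_2 ⋯ C_n ∈ Γ_n(k+2)`; consequently the image of the `k`-th Johnson homomorphism of
the braid group lies in the special derivation module `b_n(k)`. -/
theorem johnson_image_special (n k : ℕ) (hk : 2 ≤ k)
    (σ : FreeGroup (Fin n) ≃* FreeGroup (Fin n))
    (hconj : ∀ i : Fin n, ∃ c : FreeGroup (Fin n),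
      σ (FreeGroup.of i) = c * FreeGroup.of i * c⁻¹)
    (hC : ∀ i : Fin n,
      (FreeGroup.of i)⁻¹ * σ (FreeGroup.of i) ∈ (⊤ : Subgroup (FreeGroup (Fin n))).lowerCentralSeries k)
    (hfix : σ ((List.ofFn fun i : Fin n => FreeGroup.of i).prod) =
      (List.ofFn fun i : Fin n => FreeGroup.of i).prod) :
    (List.ofFn fun i : Fin n => (FreeGroup.of i)⁻¹ * σ (FreeGroup.of i)).prod ∈
      (⊤ : Subgroup (FreeGroup (Fin n))).lowerCentralSeries (k + 1) := by
  set G := FreeGroup (Fin n)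
  set H := (⊤ : Subgroup G).lowerCentralSeries (k + 1) with hHdef
  set C : Fin n → G := fun i => (FreeGroup.of i)⁻¹ * σ (FreeGroup.of i) with hCdef
  let π : G →* G ⧸ H := QuotientGroup.mk' H
  -- images of C i are central in the quotient
  have hcent : ∀ i : Fin n, ∀ y : G ⧸ H, π (C i) * y = y * π (C i) := by
    intro i y
    obtain ⟨z, rfl⟩ := QuotientGroup.mk'_surjective H y
    have hmem : ⁅C i, z⁆ ∈ H := by
      rw [hHdef, Subgroup.lowerCentralSeries_succ]
      exact Subgroup.commutator_mem_commutator (hC i) (Subgroup.mem_top z)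
    have h1 : ⁅π (C i), π z⁆ = 1 := by
      rw [← map_commutatorElement]
      exact (QuotientGroup.eq_one_iff _).mpr hmem
    exact (commutatorElement_eq_one_iff_mul_comm.mp h1)
  -- σ of the product
  have hσ : σ ((List.ofFn fun i : Fin n => FreeGroup.of i).prod)
      = (List.ofFn fun i : Fin n => FreeGroup.of i * C i).prod := by
    rw [map_list_prod, List.map_ofFn]
    have he : (⇑σ ∘ fun i : Fin n => FreeGroup.of i) = fun i : Fin n => FreeGroup.of i * C i := by
      funext i
      simp [hCdef, Function.comp]
    rw [he]
  have key : π ((List.ofFn fun i : Fin n => FreeGroup.of i * C i).prod)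
      = π ((List.ofFn fun i : Fin n => FreeGroup.of i).prod)
        * π ((List.ofFn fun i : Fin n => C i).prod) := by
    rw [map_list_prod, map_list_prod, map_list_prod, List.map_ofFn, List.map_ofFn,
      List.map_ofFn]
    exact central_prod n (fun i => π (FreeGroup.of i)) (fun i => π (C i))
      (fun i y => hcent i y)
  rw [← hσ, hfix] at key
  have hone : π ((List.ofFn fun i : Fin n => C i).prod) = 1 :=
    mul_eq_left.mp key.symm
  exact (QuotientGroup.eq_one_iff _).mp hone
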